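/- r_3(n,n,n) > 2^{r(\lfloor \log_2 n \rfloor, n-1) - 1}, where r_3(n,n,n) is the 3-color Ramsey number for triples and r(a,b) is the graph Ramsey number. -/

import Mathlib

/-- `N` is Ramsey for the 3-color diagonal 3-uniform problem: every 3-coloring of the triples
of `{0, …, N-1}` contains a monochromatic set of size `n`. -/
def HasRamsey3Color (N n : ℕ) : Prop :=
  ∀ C : Finset ℕ → Fin 3, ∃ T : Finset ℕ, T ⊆ Finset.range N ∧ T.card = n ∧
    ∃ c : Fin 3, ∀ e ⊆ T, e.card = 3 → C e = c

/-- The 3-color Ramsey number `r₃(n,n,n)` for triples. -/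
noncomputable def r3three (n : ℕ) : ℕ := sInf {N : ℕ | HasRamsey3Color N n}

/-- `N` is Ramsey for `(a, b)` for graphs: every red-blue coloring of the edges of the
complete graph on `{0, …, N-1}` (given by the colors `C x y` for `x < y`; `true` = red)
contains a red clique of size `a` or a blue clique of size `b`. -/
def HasRamsey2 (N a b : ℕ) : Prop :=
  ∀ C : ℕ → ℕ → Bool, ∃ T : Finset ℕ, T ⊆ Finset.range N ∧
    ((T.card = a ∧ ∀ x ∈ T, ∀ y ∈ T, x < y → C x y = true) ∨
     (T.card = b ∧ ∀ x ∈ T, ∀ y ∈ T, x < y → C x y = false))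

/-- The graph Ramsey number `r(a,b)`. -/
noncomputable def r2 (a b : ℕ) : ℕ := sInf {N : ℕ | HasRamsey2 N a b}


namespace StepUp


/-- top differing bit -/
def dl (x y : ℕ) : ℕ := Nat.log 2 (x ^^^ y)

lemma testBit_log_self {v : ℕ} (hv : v ≠ 0) : v.testBit (Nat.log 2 v) = true := by
  have h1 : 2 ^ Nat.log 2 v ≤ v := Nat.pow_log_le_self 2 hv
  have h2 : v < 2 ^ (Nat.log 2 v + 1) := Nat.lt_pow_succ_log_self (by norm_num) v
  have hdiv : v / 2 ^ Nat.log 2 v = 1 := by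
    apply Nat.div_eq_of_lt_le <;> rw [pow_succ] at h2 <;> omega
  rw [Nat.testBit_eq_decide_div_mod_eq, hdiv]
  simp

lemma testBit_of_log_lt {v i : ℕ} (h : Nat.log 2 v < i) : v.testBit i = false := by
  rcases Nat.eq_zero_or_pos v with rfl | hv
  · simp
  have h2 : v < 2 ^ (Nat.log 2 v + 1) := Nat.lt_pow_succ_log_self (by norm_num) v
  have : v < 2 ^ i := lt_of_lt_of_le h2 (Nat.pow_le_pow_right (by norm_num) h)
  exact Nat.testBit_lt_two_pow this

lemma log_eq_of_bits {v d : ℕ} (h1 : v.testBit d = true)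
    (h2 : ∀ i, d < i → v.testBit i = false) : Nat.log 2 v = d := by
  have hge : 2 ^ d ≤ v := Nat.ge_two_pow_of_testBit h1
  have hsh : v >>> (d + 1) = 0 := by
    apply Nat.eq_of_testBit_eq
    intro i
    rw [Nat.testBit_shiftRight, Nat.zero_testBit]
    exact h2 _ (by omega)
  rw [Nat.shiftRight_eq_div_pow] at hsh
  have hlt : v < 2 ^ (d + 1) := by
    have h := Nat.div_add_mod v (2 ^ (d + 1))
    have hm : v % 2 ^ (d + 1) < 2 ^ (d + 1) := Nat.mod_lt _ (by positivity)
    rw [hsh, Nat.mul_zero, Nat.zero_add] at h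
    omega
  exact Nat.log_eq_of_pow_le_of_lt_pow hge hlt

lemma bool_xor_false {a b : Bool} (h : (a ^^ b) = false) : a = b := by
  cases a <;> cases b <;> simp_all

lemma xor_ne_zero {x y : ℕ} (h : x ≠ y) : x ^^^ y ≠ 0 := by
  intro h0
  exact h (Nat.eq_of_testBit_eq fun i => by
    have h1 := congrArg (fun v => Nat.testBit v i) h0
    simp only [Nat.testBit_xor, Nat.zero_testBit] at h1
    exact bool_xor_false h1)

lemma testBit_dl_low {x y : ℕ} (h : x < y) : x.testBit (dl x y) = false := by
  have hne : x ^^^ y ≠ 0 := xor_ne_zero h.ne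
  have htop : (x ^^^ y).testBit (dl x y) = true := testBit_log_self hne
  rw [Nat.testBit_xor] at htop
  have habove : ∀ j, dl x y < j → x.testBit j = y.testBit j := by
    intro j hj
    have := testBit_of_log_lt (v := x ^^^ y) hj
    rw [Nat.testBit_xor] at this
    exact bool_xor_false this
  by_contra hx
  have hx' : x.testBit (dl x y) = true := by
    cases hxx : x.testBit (dl x y) <;> simp_all
  have hy' : y.testBit (dl x y) = false := by
    cases hyy : y.testBit (dl x y) <;> simp_all
  have : y < x := Nat.lt_of_testBit (dl x y) hy' hx' (fun j hj => (habove j hj).symm)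
  omega

lemma testBit_dl_high {x y : ℕ} (h : x < y) : y.testBit (dl x y) = true := by
  have hne : x ^^^ y ≠ 0 := xor_ne_zero h.ne
  have htop : (x ^^^ y).testBit (dl x y) = true := testBit_log_self hne
  rw [Nat.testBit_xor] at htop
  have := testBit_dl_low h
  cases hyy : y.testBit (dl x y) <;> simp_all

lemma testBit_dl_above {x y : ℕ} (j : ℕ) (h : dl x y < j) : x.testBit j = y.testBit j := by
  have := testBit_of_log_lt (v := x ^^^ y) h
  rw [Nat.testBit_xor] at this
  exact bool_xor_false this

lemma dl_comm (x y : ℕ) : dl x y = dl y x := by unfold dl; rw [Nat.xor_comm]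

lemma dl_ne {x y z : ℕ} (h1 : x < y) (h2 : y < z) : dl x y ≠ dl y z := by
  intro h
  have a1 := testBit_dl_high h1
  have a2 := testBit_dl_low h2
  rw [h] at a1
  simp_all

lemma dl_max {x y z : ℕ} (h1 : x < y) (h2 : y < z) :
    dl x z = max (dl x y) (dl y z) := by
  have hne := dl_ne h1 h2
  rcases lt_or_gt_of_ne hne with h | h
  · -- dl x y < dl y z, max = dl y z
    rw [max_eq_right h.le]
    apply log_eq_of_bits
    · rw [Nat.testBit_xor]
      have hx : x.testBit (dl y z) = y.testBit (dl y z) := testBit_dl_above _ h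
      have hy : y.testBit (dl y z) = false := testBit_dl_low h2
      have hz : z.testBit (dl y z) = true := testBit_dl_high h2
      rw [hx, hy, hz]; rfl
    · intro i hi
      rw [Nat.testBit_xor]
      have hx : x.testBit i = y.testBit i := testBit_dl_above _ (h.trans hi)
      have hy : y.testBit i = z.testBit i := testBit_dl_above _ hi
      rw [hx, hy]; simp
  · rw [max_eq_left h.le]
    apply log_eq_of_bits
    · rw [Nat.testBit_xor]
      have hz : z.testBit (dl x y) = y.testBit (dl x y) := (testBit_dl_above _ h).symm
      have hy : y.testBit (dl x y) = true := testBit_dl_high h1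
      have hx : x.testBit (dl x y) = false := testBit_dl_low h1
      rw [hx, hz, hy]; rfl
    · intro i hi
      rw [Nat.testBit_xor]
      have hx : x.testBit i = y.testBit i := testBit_dl_above _ hi
      have hy : y.testBit i = z.testBit i := testBit_dl_above _ (h.trans hi)
      rw [hx, hy]; simp

lemma dl_lt {x y m : ℕ} (hx : x < 2 ^ m) (hy : y < 2 ^ m) (hxy : x ≠ y) : dl x y < m := by
  have h1 : x ^^^ y < 2 ^ m := Nat.xor_lt_two_pow hx hy
  have h2 : x ^^^ y ≠ 0 := xor_ne_zero hxy
  have := Nat.pow_log_le_self 2 h2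
  by_contra h
  push_neg at h
  have : 2 ^ m ≤ 2 ^ Nat.log 2 (x ^^^ y) := Nat.pow_le_pow_right (by norm_num) h
  unfold dl at *
  omega


/-- consecutive delta -/
def D (g : ℕ → ℕ) (q : ℕ) : ℕ := dl (g q) (g (q + 1))

lemma run_exists (f : ℕ → ℕ) (a q : ℕ) (ha : a ≤ q) :
    ∃ i, a ≤ i ∧ i ≤ q ∧ ∀ r, i ≤ r → r < q → f r ≤ f q := by
  classical
  set P : ℕ → Prop := fun r => a < r ∧ f q < f (r - 1) with hP
  refine ⟨max a (Nat.findGreatest P q), le_max_left _ _,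
    max_le ha (Nat.findGreatest_le q), ?_⟩
  intro r hr1 hr2
  by_contra hc; push_neg at hc
  have : r + 1 ≤ Nat.findGreatest P q :=
    Nat.le_findGreatest (by omega) ⟨by omega, by simpa using hc⟩
  omega

section
variable {g : ℕ → ℕ} (hg : StrictMono g)
include hg

lemma dl_consec (i : ℕ) : ∀ j, i + 1 ≤ j →
    (∃ k, i ≤ k ∧ k < j ∧ dl (g i) (g j) = D g k) ∧
    (∀ k, i ≤ k → k < j → D g k ≤ dl (g i) (g j)) := by
  intro j hj
  induction j, hj using Nat.le_induction with
  | base =>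
      refine ⟨⟨i, le_refl _, by omega, rfl⟩, ?_⟩
      intro k hk1 hk2
      have : k = i := by omega
      subst this; exact le_refl _
  | succ j hij ih =>
      have hmax : dl (g i) (g (j + 1)) = max (dl (g i) (g j)) (D g j) :=
        dl_max (hg (by omega)) (hg (by omega))
      obtain ⟨⟨k, hk1, hk2, hk3⟩, hbd⟩ := ih
      constructor
      · rcases max_cases (dl (g i) (g j)) (D g j) with ⟨hm, _⟩ | ⟨hm, _⟩
        · exact ⟨k, hk1, by omega, by rw [hmax, hm, hk3]⟩
        · exact ⟨j, by omega, by omega, by rw [hmax, hm]⟩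
      · intro k' hk'1 hk'2
        rcases Nat.lt_or_ge k' j with h | h
        · calc D g k' ≤ dl (g i) (g j) := hbd k' hk'1 h
            _ ≤ _ := by rw [hmax]; exact le_max_left _ _
        · have : k' = j := by omega
          subst this
          rw [hmax]; exact le_max_right _ _

lemma max_unique {a b q q' M : ℕ} (hq : a ≤ q) (hqq' : q < q') (hq' : q' + 1 < b)
    (hub : ∀ r, a ≤ r → r + 1 < b → D g r ≤ M)
    (h1 : D g q = M) (h2 : D g q' = M) : False := by
  obtain ⟨⟨k, hk1, hk2, hk3⟩, hbd⟩ := dl_consec hg (q + 1) (q' + 1) (by omega)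
  have hle : dl (g (q + 1)) (g (q' + 1)) ≤ M := by
    rw [hk3]; exact hub k (by omega) (by omega)
  have hge : M ≤ dl (g (q + 1)) (g (q' + 1)) := by
    rw [← h2]; exact hbd q' (by omega) (by omega)
  have heq : dl (g (q + 1)) (g (q' + 1)) = M := le_antisymm hle hge
  exact dl_ne (hg (by omega : q < q + 1)) (hg (by omega : q + 1 < q' + 1))
    (by rw [heq]; exact h1)

lemma redStep (χ : ℕ → ℕ → Bool) (N : ℕ)
    (hred : ∀ i j k, i < j → j < k → k < N →
      χ (min (dl (g i) (g j)) (dl (g j) (g k))) (max (dl (g i) (g j)) (dl (g j) (g k))) = true) :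
    ∀ s a b, b ≤ N → a + 2 ^ s ≤ b →
    ∃ R : Finset ℕ, R.card = s ∧ (∀ d ∈ R, ∃ q, a ≤ q ∧ q + 1 < b ∧ d = D g q) ∧
      (∀ x ∈ R, ∀ y ∈ R, x < y → χ x y = true) := by
  intro s
  induction s with
  | zero =>
      intro a b _ _
      exact ⟨∅, by simp, by simp, by simp⟩
  | succ s ih =>
      intro a b hbN hab
      have h2s : 2 ^ s + 2 ^ s ≤ 2 ^ (s + 1) := by rw [pow_succ]; omega
      have h2s1 : (2:ℕ) ≤ 2 ^ (s + 1) := by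
        calc (2:ℕ) = 2 ^ 1 := rfl
        _ ≤ 2 ^ (s+1) := Nat.pow_le_pow_right (by norm_num) (by omega)
      have hb2 : a + 2 ≤ b := by omega
      have hQne : (Finset.Ico a (b - 1)).Nonempty := by
        rw [Finset.nonempty_Ico]; omega
      set M := ((Finset.Ico a (b - 1)).image (D g)).max' (hQne.image _) with hM
      have hMmem : M ∈ (Finset.Ico a (b - 1)).image (D g) := Finset.max'_mem _ _
      obtain ⟨p, hpQ, hpM⟩ := Finset.mem_image.mp hMmem
      rw [Finset.mem_Ico] at hpQ
      have hub : ∀ r, a ≤ r → r + 1 < b → D g r ≤ M := by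
        intro r h1 h2
        exact Finset.le_max' _ _ (Finset.mem_image_of_mem _ (Finset.mem_Ico.mpr ⟨h1, by omega⟩))
      have huniq : ∀ q, a ≤ q → q + 1 < b → q ≠ p → D g q ≠ M := by
        intro q h1 h2 h3 hDq
        rcases Nat.lt_or_ge q p with h | h
        · exact max_unique hg h1 h (by omega) hub hDq hpM
        · exact max_unique hg hpQ.1 (by omega) h2 hub hpM hDq
      by_cases hsplit : 2 ^ s ≤ p + 1 - a
      · -- recurse on the left block [a, p+1)
        obtain ⟨R', hcard', hval', hpair'⟩ := ih a (p + 1) (by omega) (by omega)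
        have hlt : ∀ z ∈ R', z < M := by
          intro z hz
          obtain ⟨q, hq1, hq2, hq3⟩ := hval' z hz
          have := hub q hq1 (by omega)
          have := huniq q hq1 (by omega) (by omega)
          omega
        have hMnot : M ∉ R' := fun h => lt_irrefl M (hlt M h)
        refine ⟨insert M R', ?_, ?_, ?_⟩
        · rw [Finset.card_insert_of_notMem hMnot, hcard']
        · intro d hd
          rcases Finset.mem_insert.mp hd with rfl | hd
          · exact ⟨p, hpQ.1, by omega, hpM.symm⟩
          · obtain ⟨q, hq1, hq2, hq3⟩ := hval' d hd
            exact ⟨q, hq1, by omega, hq3⟩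
        · intro x hx y hy hxy
          rcases Finset.mem_insert.mp hx with rfl | hx
          · rcases Finset.mem_insert.mp hy with rfl | hy
            · omega
            · exact absurd (hlt y hy) (by omega)
          rcases Finset.mem_insert.mp hy with rfl | hy
          · -- x ∈ R', y = M : the adjacency argument
            obtain ⟨q, hq1, hq2, hq3⟩ := hval' x hx
            obtain ⟨i, hi1, hi2, hi3⟩ := run_exists (D g) a q hq1
            have htriple := hred i (q + 1) (p + 1) (by omega) (by omega) (by omega)
            have hd1 : dl (g i) (g (q + 1)) = D g q := by
              obtain ⟨⟨k, hk1, hk2, hk3⟩, hbd⟩ := dl_consec hg i (q + 1) (by omega)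
              have h1 : dl (g i) (g (q + 1)) ≤ D g q := by
                rw [hk3]
                rcases Nat.lt_or_ge k q with h | h
                · exact hi3 k hk1 h
                · have : k = q := by omega
                  subst this; exact le_refl _
              exact le_antisymm h1 (hbd q hi2 (by omega))
            have hd2 : dl (g (q + 1)) (g (p + 1)) = M := by
              obtain ⟨⟨k, hk1, hk2, hk3⟩, hbd⟩ := dl_consec hg (q + 1) (p + 1) (by omega)
              have h1 : dl (g (q + 1)) (g (p + 1)) ≤ M := by
                rw [hk3]; exact hub k (by omega) (by omega)
              have h2 : M ≤ dl (g (q + 1)) (g (p + 1)) := by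
                rw [← hpM]; exact hbd p (by omega) (by omega)
              omega
            rw [hd1, hd2, ← hq3] at htriple
            rwa [min_eq_left (by omega), max_eq_right (by omega)] at htriple
          · exact hpair' x hx y hy hxy
      · -- recurse on the right block [p+1, b)
        obtain ⟨R', hcard', hval', hpair'⟩ := ih (p + 1) b hbN (by omega)
        have hlt : ∀ z ∈ R', z < M := by
          intro z hz
          obtain ⟨q, hq1, hq2, hq3⟩ := hval' z hz
          have := hub q (by omega) (by omega)
          have := huniq q (by omega) (by omega) (by omega)
          omega
        have hMnot : M ∉ R' := fun h => lt_irrefl M (hlt M h)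
        refine ⟨insert M R', ?_, ?_, ?_⟩
        · rw [Finset.card_insert_of_notMem hMnot, hcard']
        · intro d hd
          rcases Finset.mem_insert.mp hd with rfl | hd
          · exact ⟨p, hpQ.1, by omega, hpM.symm⟩
          · obtain ⟨q, hq1, hq2, hq3⟩ := hval' d hd
            exact ⟨q, by omega, hq2, hq3⟩
        · intro x hx y hy hxy
          rcases Finset.mem_insert.mp hx with rfl | hx
          · rcases Finset.mem_insert.mp hy with rfl | hy
            · omega
            · exact absurd (hlt y hy) (by omega)
          rcases Finset.mem_insert.mp hy with rfl | hy
          · obtain ⟨q, hq1, hq2, hq3⟩ := hval' x hx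
            obtain ⟨i, hi1, hi2, hi3⟩ := run_exists (D g) (p + 1) q hq1
            have htriple := hred a i (q + 1) (by omega) (by omega) (by omega)
            have hd1 : dl (g a) (g i) = M := by
              obtain ⟨⟨k, hk1, hk2, hk3⟩, hbd⟩ := dl_consec hg a i (by omega)
              have h1 : dl (g a) (g i) ≤ M := by
                rw [hk3]; exact hub k hk1 (by omega)
              have h2 : M ≤ dl (g a) (g i) := by
                rw [← hpM]; exact hbd p hpQ.1 (by omega)
              omega
            have hd2 : dl (g i) (g (q + 1)) = D g q := by
              obtain ⟨⟨k, hk1, hk2, hk3⟩, hbd⟩ := dl_consec hg i (q + 1) (by omega)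
              have h1 : dl (g i) (g (q + 1)) ≤ D g q := by
                rw [hk3]
                rcases Nat.lt_or_ge k q with h | h
                · exact hi3 k hk1 h
                · have : k = q := by omega
                  subst this; exact le_refl _
              exact le_antisymm h1 (hbd q hi2 (by omega))
            rw [hd1, hd2, ← hq3] at htriple
            rwa [min_eq_right (by omega), max_eq_left (by omega)] at htriple
          · exact hpair' x hx y hy hxy

end

lemma sort_triple {x y z : ℕ} (h1 : x < y) (h2 : y < z) :
    ({x, y, z} : Finset ℕ).sort (· ≤ ·) = [x, y, z] := by
  apply List.Perm.eq_of_pairwise' (r := (· ≤ ·)) (Finset.pairwise_sort _ _)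
    (by simp [List.pairwise_cons]; omega)
  have hval : ({x, y, z} : Finset ℕ).val = (↑[x, y, z] : Multiset ℕ) := by
    rw [Finset.insert_val_of_notMem (by simp; omega),
        Finset.insert_val_of_notMem (by simp; omega)]
    rfl
  exact Multiset.coe_eq_coe.mp (by rw [Finset.sort_eq, hval])

lemma card_triple {x y z : ℕ} (h1 : x < y) (h2 : y < z) :
    ({x, y, z} : Finset ℕ).card = 3 := by
  rw [Finset.card_insert_of_notMem (by simp; omega),
      Finset.card_insert_of_notMem (by simp; omega), Finset.card_singleton]

def tripleColor (χ : ℕ → ℕ → Bool) (e : Finset ℕ) : Fin 3 :=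
  match e.sort (· ≤ ·) with
  | [x, y, z] =>
      if χ (min (dl x y) (dl y z)) (max (dl x y) (dl y z)) then 2
      else if dl x y < dl y z then 0 else 1
  | _ => 0

lemma tripleColor_eq (χ : ℕ → ℕ → Bool) {x y z : ℕ} (h1 : x < y) (h2 : y < z) :
    tripleColor χ {x, y, z} =
      if χ (min (dl x y) (dl y z)) (max (dl x y) (dl y z)) then 2
      else if dl x y < dl y z then 0 else 1 := by
  unfold tripleColor
  rw [sort_triple h1 h2]

lemma exists_strictMono_of_card {T : Finset ℕ} {n : ℕ} (hn : 1 ≤ n) (hcard : T.card = n) :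
    ∃ g : ℕ → ℕ, StrictMono g ∧ ∀ i, i < n → g i ∈ T := by
  set f := T.orderEmbOfFin hcard with hf
  refine ⟨fun i => if h : i < n then f ⟨i, h⟩ else f ⟨n - 1, by omega⟩ + (i - n) + 1, ?_, ?_⟩
  · intro i j hij
    dsimp only
    by_cases hi : i < n
    · by_cases hj : j < n
      · rw [dif_pos hi, dif_pos hj]
        exact f.strictMono (Fin.mk_lt_mk.mpr hij)
      · rw [dif_pos hi, dif_neg hj]
        have : f ⟨i, hi⟩ ≤ f ⟨n - 1, by omega⟩ :=
          f.monotone (Fin.mk_le_mk.mpr (by omega))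
        omega
    · have hj : ¬ j < n := by omega
      rw [dif_neg hi, dif_neg hj]
      omega
  · intro i hi
    dsimp only
    rw [dif_pos hi]
    exact Finset.orderEmbOfFin_mem _ _ _

lemma no_mono (m n : ℕ) (hn : 2 ≤ n) (χ : ℕ → ℕ → Bool)
    (hredhyp : ∀ R : Finset ℕ, R ⊆ Finset.range m → R.card = Nat.log 2 n →
      ¬ (∀ x ∈ R, ∀ y ∈ R, x < y → χ x y = true))
    (hbluehyp : ∀ R : Finset ℕ, R ⊆ Finset.range m → R.card = n - 1 →
      ¬ (∀ x ∈ R, ∀ y ∈ R, x < y → χ x y = false)) :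
    ¬ HasRamsey3Color (2 ^ m) n := by
  intro hR
  obtain ⟨T, hsub, hcard, c, hmono⟩ := hR (tripleColor χ)
  obtain ⟨g, hg, hgT⟩ := exists_strictMono_of_card (by omega) hcard
  have hrange : ∀ i, i < n → g i < 2 ^ m := by
    intro i hi
    have := hsub (hgT i hi)
    simpa using this
  have hDlt : ∀ q, q + 1 < n → D g q < m := by
    intro q hq
    exact dl_lt (hrange q (by omega)) (hrange (q + 1) hq) (hg (by omega)).ne
  have hcolor : ∀ i j k, i < j → j < k → k < n →
      (if χ (min (dl (g i) (g j)) (dl (g j) (g k))) (max (dl (g i) (g j)) (dl (g j) (g k)))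
        then (2 : Fin 3) else if dl (g i) (g j) < dl (g j) (g k) then 0 else 1) = c := by
    intro i j k hij hjk hkn
    rw [← tripleColor_eq χ (hg hij) (hg hjk)]
    apply hmono
    · intro t ht
      simp only [Finset.mem_insert, Finset.mem_singleton] at ht
      rcases ht with rfl | rfl | rfl
      · exact hgT i (by omega)
      · exact hgT j (by omega)
      · exact hgT k (by omega)
    · exact card_triple (hg hij) (hg hjk)
  rcases c with ⟨cv, hcv⟩
  interval_cases cv
  · -- color 0 : increasing & blue
    have hop : ∀ i j k, i < j → j < k → k < n →
        χ (min (dl (g i) (g j)) (dl (g j) (g k))) (max (dl (g i) (g j)) (dl (g j) (g k))) = false ∧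
        dl (g i) (g j) < dl (g j) (g k) := by
      intro i j k hij hjk hkn
      have h := hcolor i j k hij hjk hkn
      cases hb : χ (min (dl (g i) (g j)) (dl (g j) (g k)))
          (max (dl (g i) (g j)) (dl (g j) (g k))) with
      | false =>
          rw [if_neg (by simp [hb])] at h
          by_cases hp : dl (g i) (g j) < dl (g j) (g k)
          · exact ⟨rfl, hp⟩
          · rw [if_neg hp] at h
            exact absurd h (by simp [Fin.ext_iff])
      | true =>
          rw [if_pos (by simp [hb])] at h
          exact absurd h (by simp [Fin.ext_iff])
    have hmono2 : ∀ i j, i < j → j < n - 1 → D g i < D g j := by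
      intro i j hij hjn
      induction j, hij using Nat.le_induction with
      | base => exact (hop i (i + 1) (i + 2) (by omega) (by omega) (by omega)).2
      | succ j hij ih =>
          exact lt_trans (ih (by omega)) ((hop j (j + 1) (j + 2) (by omega) (by omega) (by omega)).2)
    have hpairs : ∀ i j, i < j → j < n - 1 → χ (D g i) (D g j) = false := by
      intro i j hij hjn
      have h := hop i (i + 1) (j + 1) (by omega) (by omega) (by omega)
      have hd2 : dl (g (i + 1)) (g (j + 1)) = D g j := by
        obtain ⟨⟨k, hk1, hk2, hk3⟩, hbd⟩ := dl_consec hg (i + 1) (j + 1) (by omega)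
        have h1 : dl (g (i + 1)) (g (j + 1)) ≤ D g j := by
          rw [hk3]
          rcases Nat.lt_or_ge k j with hkj | hkj
          · exact (hmono2 k j hkj hjn).le
          · have : k = j := by omega
            subst this; exact le_refl _
        exact le_antisymm h1 (hbd j (by omega) (by omega))
      rw [hd2] at h
      obtain ⟨hfalse, hlt⟩ := h
      rw [min_eq_left hlt.le, max_eq_right hlt.le] at hfalse
      exact hfalse
    refine hbluehyp ((Finset.range (n - 1)).image (D g)) ?_ ?_ ?_
    · intro t ht
      obtain ⟨q, hq, rfl⟩ := Finset.mem_image.mp ht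
      rw [Finset.mem_range] at hq ⊢
      exact hDlt q (by omega)
    · rw [Finset.card_image_of_injOn, Finset.card_range]
      intro u hu v hv huv
      rw [Finset.coe_range, Set.mem_Iio] at hu hv
      by_contra hne
      rcases Nat.lt_or_ge u v with h | h
      · exact absurd huv (hmono2 u v h hv).ne
      · exact absurd huv.symm (hmono2 v u (by omega) hu).ne
    · intro x hx y hy hxy
      obtain ⟨u, hu, rfl⟩ := Finset.mem_image.mp hx
      obtain ⟨v, hv, rfl⟩ := Finset.mem_image.mp hy
      rw [Finset.mem_range] at hu hv
      rcases Nat.lt_or_ge u v with h | h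
      · exact hpairs u v h hv
      · have : v < u := by
          by_contra h'
          have : u = v := by omega
          subst this; omega
        exact absurd (hmono2 v u this hu) (by omega)
  · -- color 1 : decreasing & blue
    have hop : ∀ i j k, i < j → j < k → k < n →
        χ (min (dl (g i) (g j)) (dl (g j) (g k))) (max (dl (g i) (g j)) (dl (g j) (g k))) = false ∧
        dl (g j) (g k) < dl (g i) (g j) := by
      intro i j k hij hjk hkn
      have h := hcolor i j k hij hjk hkn
      cases hb : χ (min (dl (g i) (g j)) (dl (g j) (g k)))
          (max (dl (g i) (g j)) (dl (g j) (g k))) with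
      | false =>
          rw [if_neg (by simp [hb])] at h
          by_cases hp : dl (g i) (g j) < dl (g j) (g k)
          · rw [if_pos hp] at h
            exact absurd h (by simp [Fin.ext_iff])
          · have hne := dl_ne (hg hij) (hg hjk)
            exact ⟨rfl, by omega⟩
      | true =>
          rw [if_pos (by simp [hb])] at h
          exact absurd h (by simp [Fin.ext_iff])
    have hanti : ∀ i j, i < j → j < n - 1 → D g j < D g i := by
      intro i j hij hjn
      induction j, hij using Nat.le_induction with
      | base => exact (hop i (i + 1) (i + 2) (by omega) (by omega) (by omega)).2
      | succ j hij ih =>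
          exact lt_trans ((hop j (j + 1) (j + 2) (by omega) (by omega) (by omega)).2) (ih (by omega))
    have hpairs : ∀ i j, i < j → j < n - 1 → χ (D g j) (D g i) = false := by
      intro i j hij hjn
      have h := hop i j (j + 1) hij (by omega) (by omega)
      have hd1 : dl (g i) (g j) = D g i := by
        obtain ⟨⟨k, hk1, hk2, hk3⟩, hbd⟩ := dl_consec hg i j (by omega)
        have h1 : dl (g i) (g j) ≤ D g i := by
          rw [hk3]
          rcases Nat.lt_or_ge i k with hik | hik
          · exact (hanti i k hik (by omega)).le
          · have : k = i := by omega
            subst this; exact le_refl _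
        exact le_antisymm h1 (hbd i (by omega) (by omega))
      rw [hd1] at h
      obtain ⟨hfalse, hlt⟩ := h
      rw [min_eq_right hlt.le, max_eq_left hlt.le] at hfalse
      exact hfalse
    refine hbluehyp ((Finset.range (n - 1)).image (D g)) ?_ ?_ ?_
    · intro t ht
      obtain ⟨q, hq, rfl⟩ := Finset.mem_image.mp ht
      rw [Finset.mem_range] at hq ⊢
      exact hDlt q (by omega)
    · rw [Finset.card_image_of_injOn, Finset.card_range]
      intro u hu v hv huv
      rw [Finset.coe_range, Set.mem_Iio] at hu hv
      by_contra hne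
      rcases Nat.lt_or_ge u v with h | h
      · exact absurd huv.symm (hanti u v h hv).ne
      · exact absurd huv (hanti v u (by omega) hu).ne
    · intro x hx y hy hxy
      obtain ⟨u, hu, rfl⟩ := Finset.mem_image.mp hx
      obtain ⟨v, hv, rfl⟩ := Finset.mem_image.mp hy
      rw [Finset.mem_range] at hu hv
      rcases Nat.lt_or_ge v u with h | h
      · exact hpairs v u h hu
      · have : u < v := by
          by_contra h'
          have : u = v := by omega
          subst this; omega
        exact absurd (hanti u v this hv) (by omega)
  · -- color 2 : red
    have hop : ∀ i j k, i < j → j < k → k < n →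
        χ (min (dl (g i) (g j)) (dl (g j) (g k))) (max (dl (g i) (g j)) (dl (g j) (g k))) = true := by
      intro i j k hij hjk hkn
      have h := hcolor i j k hij hjk hkn
      cases hb : χ (min (dl (g i) (g j)) (dl (g j) (g k)))
          (max (dl (g i) (g j)) (dl (g j) (g k))) with
      | false =>
          rw [if_neg (by simp [hb])] at h
          by_cases hp : dl (g i) (g j) < dl (g j) (g k)
          · rw [if_pos hp] at h
            exact absurd h (by simp [Fin.ext_iff])
          · rw [if_neg hp] at h
            exact absurd h (by simp [Fin.ext_iff])
      | true => rfl
    obtain ⟨R, hRcard, hRval, hRpair⟩ :=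
      redStep hg χ n hop (Nat.log 2 n) 0 n (le_refl n)
        (by simpa using Nat.pow_log_le_self 2 (by omega : n ≠ 0))
    refine hredhyp R ?_ hRcard hRpair
    intro t ht
    obtain ⟨q, hq1, hq2, rfl⟩ := hRval t ht
    rw [Finset.mem_range]
    exact hDlt q hq2

lemma fiber3 {α : Type*} [DecidableEq α] {S : Finset α} (f : α → Fin 3) {t : ℕ}
    (h : 3 * t ≤ S.card) : ∃ c, t ≤ (S.filter (fun x => f x = c)).card := by
  obtain ⟨c, _, hc⟩ := Finset.exists_le_card_fiber_of_mul_le_card_of_maps_to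
    (t := (Finset.univ : Finset (Fin 3))) (f := f) (fun a _ => Finset.mem_univ _)
    Finset.univ_nonempty (by simpa using h)
  exact ⟨c, hc⟩

lemma pairwise_mem {α : Type*} {r : α → α → Prop} :
    ∀ {l : List α}, l.Pairwise r → ∀ p ∈ l, ∀ q ∈ l, p ≠ q → r p q ∨ r q p := by
  intro l
  induction l with
  | nil => intro _ p hp; simp at hp
  | cons a l ih =>
      intro hl p hp q hq hpq
      rw [List.pairwise_cons] at hl
      rcases List.mem_cons.mp hp with hp1 | hp2
      · rcases List.mem_cons.mp hq with hq1 | hq2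
        · exact absurd (hp1.trans hq1.symm) hpq
        · exact Or.inl (hp1 ▸ hl.1 q hq2)
      · rcases List.mem_cons.mp hq with hq1 | hq2
        · exact Or.inr (hq1 ▸ hl.1 p hp2)
        · exact ih hl.2 p hp2 q hq2 hpq

lemma two_ordered {e : Finset ℕ} (h : e.card = 2) : ∃ x y, x < y ∧ e = {x, y} := by
  obtain ⟨a, b, hab, rfl⟩ := Finset.card_eq_two.mp h
  rcases lt_or_gt_of_ne hab with h' | h'
  · exact ⟨a, b, h', rfl⟩
  · exact ⟨b, a, h', Finset.pair_comm a b⟩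

lemma three_ordered {e : Finset ℕ} (h : e.card = 3) :
    ∃ x y z, x < y ∧ y < z ∧ e = {x, y, z} := by
  obtain ⟨a, b, c, hab, hac, hbc, rfl⟩ := Finset.card_eq_three.mp h
  rcases lt_or_gt_of_ne hab with h1 | h1
  · rcases lt_or_gt_of_ne hbc with h2 | h2
    · exact ⟨a, b, c, h1, h2, rfl⟩
    · rcases lt_or_gt_of_ne hac with h3 | h3
      · exact ⟨a, c, b, h3, h2, by ext t; simp; tauto⟩
      · exact ⟨c, a, b, h3, h1, by ext t; simp; tauto⟩
  · rcases lt_or_gt_of_ne hac with h3 | h3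
    · exact ⟨b, a, c, h1, h3, by ext t; simp; tauto⟩
    · rcases lt_or_gt_of_ne hbc with h2 | h2
      · exact ⟨b, c, a, h2, h3, by ext t; simp; tauto⟩
      · exact ⟨c, b, a, h2, h1, by ext t; simp; tauto⟩

lemma greedy2 (C : Finset ℕ → Fin 3) : ∀ (k : ℕ) (S : Finset ℕ), 4 ^ k ≤ S.card →
    ∃ l : List (ℕ × Fin 3), l.length = k ∧ (∀ p ∈ l, p.1 ∈ S) ∧
      l.Pairwise (fun p q => p.1 < q.1 ∧ C {p.1, q.1} = p.2) := by
  intro k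
  induction k with
  | zero => exact fun S _ => ⟨[], rfl, by simp, by simp⟩
  | succ k ih =>
      intro S hS
      have hpow : 4 * 4 ^ k ≤ S.card := by rw [← pow_succ']; exact hS
      have h4 : 0 < 4 ^ k := pow_pos (by norm_num) k
      have hne : S.Nonempty := Finset.card_pos.mp (by omega)
      have hferase : 3 * 4 ^ k ≤ (S.erase (S.min' hne)).card := by
        rw [Finset.card_erase_of_mem (S.min'_mem hne)]
        omega
      obtain ⟨c, hc⟩ := fiber3 (fun x => C {S.min' hne, x}) hferase
      obtain ⟨l, hlen, hmem, hpair⟩ := ih _ hc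
      refine ⟨(S.min' hne, c) :: l, by simp [hlen], ?_, ?_⟩
      · intro p hp
        rcases List.mem_cons.mp hp with rfl | hp
        · exact S.min'_mem hne
        · have := hmem p hp
          simp only [Finset.mem_filter, Finset.mem_erase] at this
          exact this.1.2
      · rw [List.pairwise_cons]
        refine ⟨?_, hpair⟩
        intro q hq
        have hq' := hmem q hq
        simp only [Finset.mem_filter, Finset.mem_erase] at hq'
        refine ⟨?_, hq'.2⟩
        have := S.min'_le q.1 hq'.1.2
        have := hq'.1.1
        omega

lemma ramsey2 (n : ℕ) : ∃ N, ∀ C : Finset ℕ → Fin 3, ∃ I, I ⊆ Finset.range N ∧ I.card = n ∧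
    ∃ c, ∀ e ⊆ I, e.card = 2 → C e = c := by
  refine ⟨4 ^ (3 * n), ?_⟩
  intro C
  obtain ⟨l, hlen, hmem, hpair⟩ := greedy2 C (3 * n) (Finset.range (4 ^ (3 * n)))
    (by simp)
  have hnodup : l.Nodup := by
    refine hpair.imp ?_
    intro p q h heq
    rw [heq] at h
    exact lt_irrefl _ h.1
  have hE : l.toFinset.card = 3 * n := by
    rw [List.toFinset_card_of_nodup hnodup, hlen]
  obtain ⟨c, hc⟩ := fiber3 (S := l.toFinset) Prod.snd (t := n) (by omega)
  set F := l.toFinset.filter (fun p => p.2 = c) with hF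
  have hFl : ∀ p ∈ F, p ∈ l := by
    intro p hp
    exact List.mem_toFinset.mp (Finset.mem_filter.mp hp).1
  have hinj : Set.InjOn (Prod.fst : ℕ × Fin 3 → ℕ) ↑F := by
    intro p hp q hq h
    by_contra hne
    rcases pairwise_mem hpair p (hFl p hp) q (hFl q hq) hne with h' | h'
    · exact absurd h (h'.1).ne
    · exact absurd h.symm (h'.1).ne
  have himg : n ≤ (F.image Prod.fst).card := by
    rw [Finset.card_image_of_injOn hinj]
    exact hc
  obtain ⟨I, hIsub, hIcard⟩ := Finset.exists_subset_card_eq himg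
  refine ⟨I, ?_, hIcard, c, ?_⟩
  · intro t ht
    obtain ⟨p, hp, rfl⟩ := Finset.mem_image.mp (hIsub ht)
    exact hmem p (hFl p hp)
  · intro e he hcard2
    obtain ⟨x, y, hxy, rfl⟩ := two_ordered hcard2
    have hx : x ∈ I := he (by simp)
    have hy : y ∈ I := he (by simp)
    obtain ⟨p, hp, hpx⟩ := Finset.mem_image.mp (hIsub hx)
    obtain ⟨q, hq, hqy⟩ := Finset.mem_image.mp (hIsub hy)
    have hne : p ≠ q := by
      intro heq
      rw [heq, hqy] at hpx
      omega
    have hpc : p.2 = c := (Finset.mem_filter.mp hp).2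
    rcases pairwise_mem hpair p (hFl p hp) q (hFl q hq) hne with h' | h'
    · rw [← hpx, ← hqy, h'.2, hpc]
    · rw [← hpx, ← hqy] at hxy
      exact absurd h'.1 (by omega)

lemma refineTriples (C3 : Finset ℕ → Fin 3) (a : ℕ) :
    ∀ (xs : List ℕ) (pool : Finset ℕ) (t : ℕ), 3 ^ xs.length * t ≤ pool.card →
    ∃ pool', pool' ⊆ pool ∧ t ≤ pool'.card ∧
      ∀ x ∈ xs, ∀ z ∈ pool', ∀ w ∈ pool', C3 {x, a, z} = C3 {x, a, w} := by
  intro xs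
  induction xs with
  | nil =>
      intro pool t h
      exact ⟨pool, Finset.Subset.refl _, by simpa using h, by simp⟩
  | cons x xs ih =>
      intro pool t h
      have h' : 3 * (3 ^ xs.length * t) ≤ pool.card := by
        rw [List.length_cons, pow_succ', mul_assoc] at h
        exact h
      obtain ⟨c, hc⟩ := fiber3 (fun z => C3 {x, a, z}) h'
      obtain ⟨pool', hsub, hcard, hprop⟩ := ih (pool.filter fun z => C3 {x, a, z} = c) _ hc
      refine ⟨pool', fun z hz => (Finset.mem_filter.mp (hsub hz)).1, hcard, ?_⟩
      intro x' hx' z hz w hw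
      rcases List.mem_cons.mp hx' with rfl | hx'
      · have h1 := (Finset.mem_filter.mp (hsub hz)).2
        have h2 := (Finset.mem_filter.mp (hsub hw)).2
        rw [h1, h2]
      · exact hprop x' hx' z hz w hw

def BB : ℕ → ℕ → ℕ
  | 0, _ => 0
  | k + 1, p => 3 ^ p * BB k (p + 1) + 1

lemma greedy3 (C3 : Finset ℕ → Fin 3) :
    ∀ (k : ℕ) (prev : List ℕ) (S : Finset ℕ),
    (∀ x ∈ prev, ∀ y ∈ S, x < y) →
    (∀ x ∈ prev, ∀ y ∈ prev, x < y → ∀ z ∈ S, ∀ w ∈ S, C3 {x, y, z} = C3 {x, y, w}) →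
    BB k prev.length ≤ S.card →
    ∃ l : List ℕ, l.length = k ∧ (∀ z ∈ l, z ∈ S) ∧ List.Chain' (· < ·) l ∧
      (∀ x, (x ∈ prev ∨ x ∈ l) → ∀ y ∈ l, x < y → ∀ z ∈ l, ∀ w ∈ l, y < z → y < w →
        C3 {x, y, z} = C3 {x, y, w}) := by
  intro k
  induction k with
  | zero =>
      intro prev S _ _ _
      exact ⟨[], rfl, by simp, by simp [List.Chain'], by simp⟩
  | succ k ih =>
      intro prev S horder hhomog hcard
      have hBB : 3 ^ prev.length * BB k (prev.length + 1) + 1 ≤ S.card := hcard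
      have hne : S.Nonempty := Finset.card_pos.mp (by omega)
      have herase : 3 ^ prev.length * BB k (prev.length + 1) ≤ (S.erase (S.min' hne)).card := by
        rw [Finset.card_erase_of_mem (S.min'_mem hne)]
        omega
      obtain ⟨pool, hpoolsub, hpoolcard, hpoolhom⟩ := refineTriples C3 (S.min' hne) prev _ _ herase
      set a := S.min' hne with ha
      have hpoolS : ∀ z ∈ pool, z ∈ S := fun z hz => Finset.mem_of_mem_erase (hpoolsub hz)
      have haltpool : ∀ z ∈ pool, a < z := by
        intro z hz
        have h1 := Finset.ne_of_mem_erase (hpoolsub hz)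
        have h2 := S.min'_le z (Finset.mem_of_mem_erase (hpoolsub hz))
        omega
      have ho : ∀ x ∈ prev ++ [a], ∀ y ∈ pool, x < y := by
        intro x hx y hy
        rcases List.mem_append.mp hx with hx | hx
        · exact horder x hx y (hpoolS y hy)
        · simp only [List.mem_singleton] at hx
          subst hx
          exact haltpool y hy
      have hh : ∀ x ∈ prev ++ [a], ∀ y ∈ prev ++ [a], x < y →
          ∀ z ∈ pool, ∀ w ∈ pool, C3 {x, y, z} = C3 {x, y, w} := by
        intro x hx y hy hxy z hz w hw
        rcases List.mem_append.mp hy with hy | hy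
        · rcases List.mem_append.mp hx with hx | hx
          · exact hhomog x hx y hy hxy z (hpoolS z hz) w (hpoolS w hw)
          · simp only [List.mem_singleton] at hx
            subst hx
            exact absurd (horder y hy a (S.min'_mem hne)) (by omega)
        · simp only [List.mem_singleton] at hy
          subst hy
          rcases List.mem_append.mp hx with hx | hx
          · exact hpoolhom x hx z hz w hw
          · simp only [List.mem_singleton] at hx
            omega
      have hc : BB k (prev ++ [a]).length ≤ pool.card := by
        rw [List.length_append, List.length_singleton]
        exact hpoolcard
      obtain ⟨l, hlen, hmem, hchain, hfinal⟩ := ih (prev ++ [a]) pool ho hh hc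
      refine ⟨a :: l, by simp [hlen], ?_, ?_, ?_⟩
      · intro z hz
        rcases List.mem_cons.mp hz with rfl | hz
        · exact S.min'_mem hne
        · exact hpoolS z (hmem z hz)
      · rw [List.Chain', List.isChain_cons]
        exact ⟨fun y hy => haltpool y (hmem y (List.mem_of_mem_head? hy)), hchain⟩
      · intro x hx y hy hxy z hz w hw hyz hyw
        rcases List.mem_cons.mp hy with rfl | hy
        · have hxprev : x ∈ prev := by
            rcases hx with hx | hx
            · exact hx
            · rcases List.mem_cons.mp hx with rfl | hx
              · omega
              · exact absurd (haltpool x (hmem x hx)) (by omega)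
          have hz' : z ∈ l := by
            rcases List.mem_cons.mp hz with rfl | hz'
            · omega
            · exact hz'
          have hw' : w ∈ l := by
            rcases List.mem_cons.mp hw with rfl | hw'
            · omega
            · exact hw'
          exact hpoolhom x hxprev z (hmem z hz') w (hmem w hw')
        · have hay : a < y := haltpool y (hmem y hy)
          have hz' : z ∈ l := by
            rcases List.mem_cons.mp hz with rfl | hz'
            · omega
            · exact hz'
          have hw' : w ∈ l := by
            rcases List.mem_cons.mp hw with rfl | hw'
            · omega
            · exact hw'
          have hx' : x ∈ prev ++ [a] ∨ x ∈ l := by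
            rcases hx with hx | hx
            · exact Or.inl (List.mem_append.mpr (Or.inl hx))
            · rcases List.mem_cons.mp hx with rfl | hx
              · exact Or.inl (List.mem_append.mpr (Or.inr (by simp)))
              · exact Or.inr hx
          exact hfinal x hx' y hy hxy z hz' w hw' hyz hyw

lemma sort_pair {x y : ℕ} (h1 : x < y) :
    ({x, y} : Finset ℕ).sort (· ≤ ·) = [x, y] := by
  apply List.Perm.eq_of_pairwise' (r := (· ≤ ·)) (Finset.pairwise_sort _ _)
    (by simp [List.pairwise_cons]; omega)
  have hval : ({x, y} : Finset ℕ).val = (↑[x, y] : Multiset ℕ) := by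
    rw [Finset.insert_val_of_notMem (by simp; omega)]
    rfl
  exact Multiset.coe_eq_coe.mp (by rw [Finset.sort_eq, hval])

lemma ramsey3_exists (n : ℕ) : ∃ N, HasRamsey3Color N n := by
  obtain ⟨N2, hN2⟩ := ramsey2 n
  refine ⟨BB (N2 + 1) 0, ?_⟩
  intro C
  obtain ⟨l, hlen, hmem, hchain, hfinal⟩ := greedy3 C (N2 + 1) [] (Finset.range (BB (N2 + 1) 0))
    (by simp) (by simp) (by simp)
  have hpw : l.Pairwise (· < ·) := List.isChain_iff_pairwise.mp hchain
  have hgetmono : ∀ i j, i < j → j < l.length → l.getD i 0 < l.getD j 0 := by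
    intro i j hij hj
    have hi : i < l.length := by omega
    rw [List.getD_eq_getElem l 0 hi, List.getD_eq_getElem l 0 hj]
    exact List.pairwise_iff_get.mp hpw ⟨i, hi⟩ ⟨j, hj⟩ hij
  have hgetmem : ∀ j, j < l.length → l.getD j 0 ∈ l := by
    intro j hj
    rw [List.getD_eq_getElem l 0 hj]
    exact List.getElem_mem _
  -- induced pair coloring on indices
  set Dp : Finset ℕ → Fin 3 := fun e =>
    match e.sort (· ≤ ·) with
    | [i, j] => C {l.getD i 0, l.getD j 0, l.getD (j + 1) 0}
    | _ => 0
    with hDp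
  obtain ⟨I, hIsub, hIcard, c, hIpair⟩ := hN2 Dp
  have hIlt : ∀ i ∈ I, i < N2 := fun i hi => Finset.mem_range.mp (hIsub hi)
  refine ⟨I.image (fun i => l.getD i 0), ?_, ?_, c, ?_⟩
  · intro t ht
    obtain ⟨i, hi, rfl⟩ := Finset.mem_image.mp ht
    exact hmem _ (hgetmem i (by have := hIlt i hi; omega))
  · rw [Finset.card_image_of_injOn, hIcard]
    intro u hu v hv huv
    simp only [Finset.coe_sort_coe, Finset.mem_coe] at hu hv
    by_contra hne
    have hu' := hIlt u hu
    have hv' := hIlt v hv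
    rcases Nat.lt_or_ge u v with h | h
    · exact absurd huv (hgetmono u v h (by omega)).ne
    · exact absurd huv.symm (hgetmono v u (by omega) (by omega)).ne
  · intro e he hecard
    obtain ⟨x, y, z, hxy, hyz, rfl⟩ := three_ordered hecard
    have hx := he (show x ∈ ({x, y, z} : Finset ℕ) by simp)
    have hy := he (show y ∈ ({x, y, z} : Finset ℕ) by simp)
    have hz := he (show z ∈ ({x, y, z} : Finset ℕ) by simp)
    obtain ⟨i, hiI, hix⟩ := Finset.mem_image.mp hx
    obtain ⟨j, hjI, hjy⟩ := Finset.mem_image.mp hy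
    obtain ⟨k, hkI, hkz⟩ := Finset.mem_image.mp hz
    have hi' := hIlt i hiI
    have hj' := hIlt j hjI
    have hk' := hIlt k hkI
    have hij : i < j := by
      rcases Nat.lt_or_ge i j with h | h
      · exact h
      · rcases Nat.eq_or_lt_of_le h with heq | h
        · subst heq; omega
        · exact absurd (hgetmono j i h (by omega)) (by omega)
    have hjk : j < k := by
      rcases Nat.lt_or_ge j k with h | h
      · exact h
      · rcases Nat.eq_or_lt_of_le h with heq | h
        · subst heq; omega
        · exact absurd (hgetmono k j h (by omega)) (by omega)
    have hj1 : j + 1 < l.length := by omega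
    subst hix; subst hjy; subst hkz
    have hcalc : C {l.getD i 0, l.getD j 0, l.getD k 0} =
        C {l.getD i 0, l.getD j 0, l.getD (j + 1) 0} :=
      hfinal _ (Or.inr (hgetmem i (by omega))) _ (hgetmem j (by omega)) hxy
        _ (hgetmem k (by omega)) _ (hgetmem _ hj1) hyz
        (hgetmono j (j + 1) (by omega) hj1)
    have hDpval : Dp {i, j} = C {l.getD i 0, l.getD j 0, l.getD (j + 1) 0} := by
      show (match Finset.sort ({i, j} : Finset ℕ) (· ≤ ·) with
        | [i, j] => C {l.getD i 0, l.getD j 0, l.getD (j + 1) 0}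
        | _ => (0 : Fin 3)) = _
      rw [sort_pair hij]
    have hDpe : Dp {i, j} = c := by
      apply hIpair
      · intro t ht
        simp only [Finset.mem_insert, Finset.mem_singleton] at ht
        rcases ht with rfl | rfl
        · exact hiI
        · exact hjI
      · exact Finset.card_pair hij.ne
    rw [hcalc, ← hDpval, hDpe]

end StepUp

/-- `r₃(n,n,n) > 2^{r(⌊log₂ n⌋, n-1) - 1}`. -/
theorem r3three_lower (n : ℕ) (hn : 2 ≤ n) :
    2 ^ (r2 (Nat.log 2 n) (n - 1) - 1) < r3three n := by
  classical
  set a := Nat.log 2 n with ha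
  set b := n - 1 with hb
  set m := r2 a b - 1 with hm
  have hloga : 1 ≤ a := by
    rw [ha]
    exact Nat.log_pos (by norm_num) hn
  have hnot : ¬ HasRamsey2 m a b := by
    intro h
    have h0 : ¬ HasRamsey2 0 a b := by
      intro h0
      obtain ⟨T, hT, hc⟩ := h0 (fun _ _ => true)
      have hTe : T = ∅ := by
        rw [← Finset.subset_empty]
        simpa using hT
      subst hTe
      rcases hc with ⟨hcard, _⟩ | ⟨hcard, _⟩
      · simp at hcard; omega
      · simp at hcard; omega
    have hmem : m ∈ {N | HasRamsey2 N a b} := h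
    have hle := Nat.sInf_le hmem
    have hin := Nat.sInf_mem (⟨m, hmem⟩ : {N | HasRamsey2 N a b}.Nonempty)
    have hr2 : r2 a b = sInf {N | HasRamsey2 N a b} := rfl
    rcases Nat.eq_zero_or_pos (sInf {N | HasRamsey2 N a b}) with h0' | h0'
    · rw [h0'] at hin; exact h0 hin
    · omega
  obtain ⟨χ, hχ⟩ := not_forall.mp hnot
  have hχ' := not_exists.mp hχ
  have hred : ∀ R : Finset ℕ, R ⊆ Finset.range m → R.card = a →
      ¬(∀ x ∈ R, ∀ y ∈ R, x < y → χ x y = true) := by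
    intro R h1 h2 h3
    exact hχ' R ⟨h1, Or.inl ⟨h2, h3⟩⟩
  have hblue : ∀ R : Finset ℕ, R ⊆ Finset.range m → R.card = b →
      ¬(∀ x ∈ R, ∀ y ∈ R, x < y → χ x y = false) := by
    intro R h1 h2 h3
    exact hχ' R ⟨h1, Or.inr ⟨h2, h3⟩⟩
  have hnomono := StepUp.no_mono m n hn χ hred hblue
  obtain ⟨N, hN⟩ := StepUp.ramsey3_exists n
  by_contra hcon
  push_neg at hcon
  have hmem3 := Nat.sInf_mem (⟨N, hN⟩ : {N | HasRamsey3Color N n}.Nonempty)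
  apply hnomono
  intro C
  obtain ⟨T, h1, h2, h3⟩ := hmem3 C
  refine ⟨T, h1.trans (Finset.range_subset_range.mpr ?_), h2, h3⟩
  exact hcon
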